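/- arXiv:2309.04922 — 2 statements merged into one kernel-verified Lean document; each statement's English description precedes it below -/
import Mathlib

section
/- Fix constants α, β > 0, d* < d, and ρ > 0. Define h : (0,∞) → ℝ by h(g) = d - √(2/π)·ρ·α·g·exp(-(d* - d)²/(2β²g²)) / (1 + erf((d* - d)/(√2 βg))). Then h is strictly monotonically decreasing in g. -/
open Real

/-- The Gauss error function `erf x = (2/√π) ∫₀ˣ e^{-t²} dt`. -/
noncomputable def erf (x : ℝ) : ℝ := (2 / Real.sqrt Real.pi) * ∫ t in (0:ℝ)..x, Real.exp (-t^2)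

open Real Filter MeasureTheory intervalIntegral

/-- Auxiliary: `∫₀ˣ e^{-t²} dt`. -/
noncomputable def E' (x : ℝ) : ℝ := ∫ t in (0:ℝ)..x, Real.exp (-t^2)

lemma cont_g' : Continuous (fun t : ℝ => Real.exp (-t^2)) := by continuity

lemma integrable_g' : MeasureTheory.Integrable (fun t : ℝ => Real.exp (-t^2)) := by
  simpa using integrable_exp_neg_mul_sq (b := 1) one_pos

lemma hasDerivAt_E' (x : ℝ) : HasDerivAt E' (Real.exp (-x^2)) x :=
  intervalIntegral.integral_hasDerivAt_right (cont_g'.intervalIntegrable 0 x)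
    (cont_g'.stronglyMeasurableAtFilter _ _) cont_g'.continuousAt

lemma E'_neg (x : ℝ) : E' (-x) = - E' x := by
  have h := intervalIntegral.integral_comp_neg (a := (0:ℝ)) (b := x) (fun t => Real.exp (-t^2))
  simp only [neg_neg, neg_zero, even_neg] at h
  have h2 : ∫ t in (0:ℝ)..x, Real.exp (-(-t)^2) = ∫ t in (0:ℝ)..x, Real.exp (-t^2) := by
    congr 1; ext t; ring_nf
  rw [h2] at h
  unfold E'
  rw [h, intervalIntegral.integral_symm]

lemma tendsto_E' : Tendsto E' atTop (nhds (Real.sqrt π / 2)) := by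
  have h := MeasureTheory.intervalIntegral_tendsto_integral_Ioi (μ := volume)
    (f := fun t : ℝ => Real.exp (-t^2)) (b := fun x : ℝ => x) (l := atTop) 0
    integrable_g'.integrableOn tendsto_id
  have hg : ∫ t in Set.Ioi (0:ℝ), Real.exp (-t^2) = Real.sqrt π / 2 := by
    simpa using integral_gaussian_Ioi 1
  rw [hg] at h
  exact h

/-- Auxiliary: the Mills-ratio comparison function. -/
noncomputable def phi' (t : ℝ) : ℝ := t * Real.exp (-t^2) / (2*t^2+1)

lemma hasDerivAt_exp_neg_sq' (t : ℝ) :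
    HasDerivAt (fun t : ℝ => Real.exp (-t^2)) (Real.exp (-t^2) * (-2*t)) t := by
  have h1 : HasDerivAt (fun t : ℝ => -t^2) (-2*t) t := by
    exact (hasDerivAt_pow 2 t).neg.congr_deriv (by norm_num)
  simpa using h1.exp

lemma hasDerivAt_phi' (t : ℝ) :
    HasDerivAt phi' (Real.exp (-t^2) * (1 - 4*t^2 - 4*t^4) / (2*t^2+1)^2) t := by
  have hden : (2*t^2+1 : ℝ) ≠ 0 := by positivity
  have h1 : HasDerivAt (fun t : ℝ => t * Real.exp (-t^2))
      (1 * Real.exp (-t^2) + t * (Real.exp (-t^2) * (-2*t))) t :=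
    (hasDerivAt_id t).mul (hasDerivAt_exp_neg_sq' t)
  have h2 : HasDerivAt (fun t : ℝ => 2*t^2+1) (2*(2*t)+0) t := by
    exact (((hasDerivAt_pow 2 t).const_mul 2).add_const 1).congr_deriv (by ring)
  have h := h1.div h2 hden
  refine h.congr_deriv ?_
  field_simp
  ring

lemma tendsto_phi' : Tendsto phi' atTop (nhds 0) := by
  have hexp : Tendsto (fun t : ℝ => Real.exp (-t^2)) atTop (nhds 0) := by
    have h2 : Tendsto (fun t : ℝ => -t^2) atTop atBot :=
      tendsto_neg_atBot_iff.mpr (tendsto_pow_atTop (by norm_num))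
    exact Real.tendsto_exp_atBot.comp h2
  apply tendsto_of_tendsto_of_tendsto_of_le_of_le' tendsto_const_nhds hexp
  · filter_upwards [eventually_ge_atTop (0:ℝ)] with t ht
    unfold phi'; positivity
  · filter_upwards [eventually_ge_atTop (0:ℝ)] with t ht
    unfold phi'
    rw [div_le_iff₀ (by positivity)]
    nlinarith [Real.exp_pos (-t^2), sq_nonneg (t-1)]

/-- Auxiliary: `E' + phi'` is strictly increasing. -/
noncomputable def G' (t : ℝ) : ℝ := E' t + phi' t

lemma strictMono_G' : StrictMono G' := by
  apply strictMono_of_deriv_pos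
  intro t
  have hG : HasDerivAt G'
      (Real.exp (-t^2) + Real.exp (-t^2) * (1 - 4*t^2 - 4*t^4) / (2*t^2+1)^2) t :=
    (hasDerivAt_E' t).add (hasDerivAt_phi' t)
  rw [hG.deriv]
  have hden : (2*t^2+1 : ℝ) ≠ 0 := by positivity
  have he : Real.exp (-t^2) + Real.exp (-t^2) * (1 - 4*t^2 - 4*t^4) / (2*t^2+1)^2
      = 2 * Real.exp (-t^2) / (2*t^2+1)^2 := by
    field_simp
    ring
  rw [he]; positivity

/-- Gordon-type inequality: `v e^{-v²}/(2v²+1) < ∫_v^∞ e^{-t²} dt`. -/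
lemma gordon' (v : ℝ) : phi' v < Real.sqrt π / 2 - E' v := by
  have h1 : G' v < G' (v+1) := strictMono_G' (by linarith)
  have htend : Tendsto G' atTop (nhds (Real.sqrt π / 2)) := by
    have := tendsto_E'.add tendsto_phi'
    rw [add_zero] at this; exact this
  have h2 : G' (v+1) ≤ Real.sqrt π / 2 := by
    apply ge_of_tendsto htend
    filter_upwards [eventually_ge_atTop (v+1)] with t ht
    exact strictMono_G'.monotone ht
  have : G' v < Real.sqrt π / 2 := lt_of_lt_of_le h1 h2
  unfold G' at this; linarith

lemma T_pos' {v : ℝ} (hv : 0 < v) : 0 < Real.sqrt π / 2 - E' v := by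
  refine lt_trans ?_ (gordon' v)
  unfold phi'; positivity

/-- Auxiliary: the rescaled conditional-expectation term. -/
noncomputable def Phi' (C g : ℝ) : ℝ :=
  g * Real.exp (-(C/g)^2) / (Real.sqrt π/2 - E' (C/g))

lemma hasDerivAt_Phi' {C : ℝ} (hC : 0 < C) {g : ℝ} (hg : 0 < g) :
    HasDerivAt (Phi' C)
      (Real.exp (-(C/g)^2) *
        ((1 + 2*(C/g)^2) * (Real.sqrt π/2 - E' (C/g)) - (C/g) * Real.exp (-(C/g)^2))
        / (Real.sqrt π/2 - E' (C/g))^2) g := by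
  have hgne : g ≠ 0 := hg.ne'
  have hv : 0 < C / g := by positivity
  have hTne : Real.sqrt π/2 - E' (C/g) ≠ 0 := (T_pos' hv).ne'
  have hw : HasDerivAt (fun g : ℝ => C/g) (-(C/g^2)) g := by
    have := (hasDerivAt_inv hgne).const_mul C
    simpa [div_eq_mul_inv, neg_div, mul_comm] using this
  have hv2 : HasDerivAt (fun g : ℝ => (C/g)^2) (2*(C/g)^1*(-(C/g^2))) g := by
    exact (hw.pow 2).congr_deriv (by norm_num)
  have hexp' : HasDerivAt (fun g : ℝ => Real.exp (-(C/g)^2))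
      (Real.exp (-(C/g)^2) * (-(2*(C/g)^1*(-(C/g^2))))) g := hv2.neg.exp
  have hnum : HasDerivAt (fun g : ℝ => g * Real.exp (-(C/g)^2))
      (1 * Real.exp (-(C/g)^2) + g * (Real.exp (-(C/g)^2) * (-(2*(C/g)^1*(-(C/g^2)))))) g :=
    (hasDerivAt_id g).mul hexp'
  have hT : HasDerivAt (fun g : ℝ => Real.sqrt π/2 - E' (C/g))
      (-(Real.exp (-(C/g)^2) * (-(C/g^2)))) g := by
    have hE : HasDerivAt (fun g : ℝ => E' (C/g)) (Real.exp (-(C/g)^2) * (-(C/g^2))) g :=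
      (hasDerivAt_E' (C/g)).comp g hw
    exact hE.const_sub _
  have h := hnum.div hT hTne
  refine h.congr_deriv ?_
  have hCg2 : C/g^2 = (C/g)/g := by rw [pow_two, ← div_div]
  rw [hCg2]
  set v := C/g with hv'
  set ev := Real.exp (-v^2) with hev'
  set T := Real.sqrt π/2 - E' v with hT'
  field_simp

lemma strictMonoOn_Phi' {C : ℝ} (hC : 0 < C) : StrictMonoOn (Phi' C) (Set.Ioi 0) := by
  apply strictMonoOn_of_deriv_pos (convex_Ioi 0)
  · intro g hg
    exact (hasDerivAt_Phi' hC hg).differentiableAt.continuousAt.continuousWithinAt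
  · intro g hg
    rw [interior_Ioi] at hg
    have hg' : (0:ℝ) < g := hg
    rw [(hasDerivAt_Phi' hC hg').deriv]
    have hv : 0 < C / g := by positivity
    have hT := T_pos' hv
    have hgord := gordon' (C/g)
    unfold phi' at hgord
    set v := C/g
    have hkey : 0 < (1 + 2*v^2) * (Real.sqrt π/2 - E' v) - v * Real.exp (-v^2) := by
      have h1 : v * Real.exp (-v^2) / (2*v^2+1) < Real.sqrt π/2 - E' v := hgord
      rw [div_lt_iff₀ (by positivity)] at h1
      nlinarith
    exact div_pos (mul_pos (Real.exp_pos _) hkey) (pow_pos hT 2)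

/-- For positive correlation `ρ > 0`, the conditional expected inter-vehicle distance
is strictly decreasing in the diffusion coefficient `g`. -/
theorem conditional_expectation_strictAnti_in_g
    (α β d dstar ρ : ℝ) (hα : 0 < α) (hβ : 0 < β) (hd : dstar < d) (hρ : 0 < ρ) :
    StrictAntiOn (fun g : ℝ =>
      d - Real.sqrt (2 / Real.pi) * (ρ * α * g * Real.exp (-(dstar - d)^2 / (2 * β^2 * g^2))) /
        (1 + erf ((dstar - d) / (Real.sqrt 2 * (β * g))))) (Set.Ioi (0 : ℝ)) := by
  have hc : (0:ℝ) < d - dstar := sub_pos.mpr hd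
  have hs2 : (0:ℝ) < Real.sqrt 2 := by positivity
  have hsπ : (0:ℝ) < Real.sqrt π := Real.sqrt_pos.mpr Real.pi_pos
  have h2 : (Real.sqrt 2)^2 = (2:ℝ) := Real.sq_sqrt (by norm_num)
  set C := (d - dstar) / (Real.sqrt 2 * β) with hCdef
  have hC : 0 < C := by positivity
  have key : ∀ g : ℝ, 0 < g →
      d - Real.sqrt (2 / Real.pi) * (ρ * α * g * Real.exp (-(dstar - d)^2 / (2 * β^2 * g^2))) /
        (1 + erf ((dstar - d) / (Real.sqrt 2 * (β * g))))
      = d - (ρ * α / Real.sqrt 2) * Phi' C g := by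
    intro g hg
    have hv : 0 < C / g := by positivity
    have hT := T_pos' hv
    have harg : (dstar - d) / (Real.sqrt 2 * (β * g)) = -(C/g) := by
      rw [hCdef]; field_simp
      ring
    have hexp : -(dstar - d)^2 / (2 * β^2 * g^2) = -(C/g)^2 := by
      rw [hCdef, div_pow, div_pow, mul_pow, h2]
      field_simp
      ring
    have herf : 1 + erf ((dstar - d) / (Real.sqrt 2 * (β * g)))
        = (2 / Real.sqrt π) * (Real.sqrt π / 2 - E' (C/g)) := by
      rw [harg]
      show 1 + (2 / Real.sqrt π) * E' (-(C/g)) = _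
      rw [E'_neg]
      field_simp
      ring
    rw [hexp, herf]
    have hsqd : Real.sqrt (2 / π) = Real.sqrt 2 / Real.sqrt π :=
      Real.sqrt_div (by norm_num) π
    rw [hsqd]
    unfold Phi'
    set ev := Real.exp (-(C/g)^2) with hev
    set T := Real.sqrt π / 2 - E' (C/g) with hTd
    congr 1
    field_simp
    linear_combination ev * h2
  intro g1 hg1 g2 hg2 h12
  simp only [Set.mem_Ioi] at hg1 hg2
  simp only
  rw [key g1 hg1, key g2 hg2]
  have hmono := strictMonoOn_Phi' hC (Set.mem_Ioi.mpr hg1) (Set.mem_Ioi.mpr hg2) h12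
  have hK : 0 < ρ * α / Real.sqrt 2 := by positivity
  have := mul_lt_mul_of_pos_left hmono hK
  linarith
end

section
/- Fix constants α, β > 0, d* < d, and ρ < 0. Define h : (0,∞) → ℝ by h(g) = d - √(2/π)·ρ·α·g·exp(-(d* - d)²/(2β²g²)) / (1 + erf((d* - d)/(√2 βg))). Then h is strictly monotonically increasing in g. -/
open Real

namespace CEaux

open MeasureTheory Set Filter

lemma gauss_integrable : Integrable (fun t : ℝ => Real.exp (-t^2)) := by
  simpa using integrable_exp_neg_mul_sq (one_pos (α := ℝ))

noncomputable def F (x : ℝ) : ℝ := ∫ t in Iic x, Real.exp (-t^2)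

lemma F_pos (x : ℝ) : 0 < F x := by
  rw [F]
  refine (setIntegral_pos_iff_support_of_nonneg_ae
    (Eventually.of_forall fun t => (Real.exp_pos _).le) gauss_integrable.integrableOn).2 ?_
  have hs : Function.support (fun t : ℝ => Real.exp (-t^2)) = Set.univ := by
    ext t; simp [Real.exp_ne_zero]
  rw [hs, Set.univ_inter, Real.volume_Iic]
  exact ENNReal.zero_lt_top

lemma F_eq (u : ℝ) : F u = F 0 + ∫ t in (0:ℝ)..u, Real.exp (-t^2) := by
  rw [← intervalIntegral.integral_Iic_sub_Iic gauss_integrable.integrableOn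
    gauss_integrable.integrableOn, F, F]
  ring

lemma F_hasDeriv (x : ℝ) : HasDerivAt F (Real.exp (-x^2)) x := by
  have hcont : Continuous (fun t : ℝ => Real.exp (-t^2)) := by continuity
  have h1 : HasDerivAt (fun u : ℝ => ∫ t in (0:ℝ)..u, Real.exp (-t^2)) (Real.exp (-x^2)) x :=
    intervalIntegral.integral_hasDerivAt_right (hcont.intervalIntegrable _ _)
      (hcont.stronglyMeasurableAtFilter _ _) hcont.continuousAt
  have heq : F = fun u : ℝ => F 0 + ∫ t in (0:ℝ)..u, Real.exp (-t^2) := funext F_eq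
  rw [heq]
  simpa using (h1.const_add (F 0))

lemma F_zero : F 0 = Real.sqrt π / 2 := by
  have h1 := integral_comp_neg_Iic (0:ℝ) (fun x => Real.exp (-x^2))
  simp only [neg_neg, neg_zero, neg_sq] at h1
  have h2 := integral_gaussian_Ioi 1
  simp only [one_mul, neg_mul] at h2
  rw [F, h1, h2]
  norm_num

lemma F_tendsto : Tendsto F atBot (nhds 0) := by
  have h := intervalIntegral_tendsto_integral_Iic (0:ℝ)
    (gauss_integrable.integrableOn (s := Iic 0)) tendsto_id
  have heq : F = fun y : ℝ => F 0 - ∫ t in y..(0:ℝ), Real.exp (-t^2) := by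
    funext u
    rw [← intervalIntegral.integral_Iic_sub_Iic gauss_integrable.integrableOn
      gauss_integrable.integrableOn, F, F]
    ring
  rw [heq]
  have hF0 : F 0 = ∫ t in Iic (0:ℝ), Real.exp (-t^2) := rfl
  rw [hF0]
  have h2 := (tendsto_const_nhds (α := ℝ) (f := atBot)
    (x := ∫ t in Iic (0:ℝ), Real.exp (-t^2) ∂volume)).sub h
  simp only [sub_self, id_eq] at h2
  exact h2

lemma one_add_erf (x : ℝ) : 1 + erf x = (2 / Real.sqrt π) * F x := by
  have hpi : (0:ℝ) < Real.sqrt π := Real.sqrt_pos.2 Real.pi_pos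
  have h : erf x = (2 / Real.sqrt π) * (F x - F 0) := by
    rw [erf, ← intervalIntegral.integral_Iic_sub_Iic gauss_integrable.integrableOn
      gauss_integrable.integrableOn, F, F]
  rw [h, F_zero]
  field_simp
  ring

noncomputable def ft (y : ℝ) : ℝ := -y * Real.exp (-y^2) / (1 + 2*y^2)

lemma denom_pos (y : ℝ) : (0:ℝ) < 1 + 2*y^2 := by positivity

lemma ft_hasDeriv (y : ℝ) :
    HasDerivAt ft (Real.exp (-y^2) * (1 - 2/(1+2*y^2)^2)) y := by
  have hexp : HasDerivAt (fun y : ℝ => Real.exp (-y^2)) (Real.exp (-y^2) * (-(2*y))) y := by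
    have h1 : HasDerivAt (fun y : ℝ => -y^2) (-(2*y)) y := by
      simpa using (hasDerivAt_pow 2 y).fun_neg
    exact h1.exp
  have hnum : HasDerivAt (fun y : ℝ => -y * Real.exp (-y^2))
      (-Real.exp (-y^2) + -y * (Real.exp (-y^2) * (-(2*y)))) y := by
    simpa using ((hasDerivAt_id y).fun_neg.fun_mul hexp)
  have hden : HasDerivAt (fun y : ℝ => 1 + 2*y^2) (2*(2*y)) y := by
    simpa using ((hasDerivAt_pow 2 y).const_mul 2).const_add 1
  have h := hnum.fun_div hden (by positivity : (1:ℝ) + 2*y^2 ≠ 0)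
  refine h.congr_deriv (Eq.symm ?_)
  have hd := denom_pos y
  field_simp
  ring

lemma ft_tendsto : Tendsto ft atBot (nhds 0) := by
  have hexp : Tendsto (fun y : ℝ => Real.exp y) atBot (nhds 0) := Real.tendsto_exp_atBot
  have hneg : Tendsto (fun y : ℝ => -Real.exp y) atBot (nhds 0) := by
    simpa using hexp.neg
  refine tendsto_of_tendsto_of_tendsto_of_le_of_le' hneg hexp ?_ ?_
  · filter_upwards [eventually_le_atBot (-1:ℝ)] with y hy
    have h0 : (0:ℝ) ≤ ft y := by
      have hy' : (0:ℝ) ≤ -y := by linarith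
      exact div_nonneg (mul_nonneg hy' (Real.exp_pos _).le) (denom_pos y).le
    nlinarith [Real.exp_pos y]
  · filter_upwards [eventually_le_atBot (-1:ℝ)] with y hy
    have h1 : ft y ≤ Real.exp (-y^2) := by
      rw [ft, div_le_iff₀ (denom_pos y)]
      nlinarith [Real.exp_pos (-y^2), sq_nonneg (2*y+1),
        mul_nonneg (Real.exp_pos (-y^2)).le (sq_nonneg (2*y+1))]
    have h2 : Real.exp (-y^2) ≤ Real.exp y := by
      apply Real.exp_le_exp.2
      nlinarith
    linarith

lemma key (y : ℝ) : ft y < F y := by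
  set W : ℝ → ℝ := fun z => F z - ft z with hW
  have hWd : ∀ z, HasDerivAt W (2 * Real.exp (-z^2) / (1+2*z^2)^2) z := by
    intro z
    have h := (F_hasDeriv z).fun_sub (ft_hasDeriv z)
    refine h.congr_deriv (Eq.symm ?_)
    have := denom_pos z
    field_simp
    ring
  have hmono : StrictMono W := by
    apply strictMono_of_deriv_pos
    intro z
    rw [(hWd z).deriv]
    positivity
  have hWlim : Tendsto W atBot (nhds 0) := by simpa using F_tendsto.sub ft_tendsto
  have h1 : 0 ≤ W (y - 1) := by
    refine le_of_tendsto hWlim ?_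
    filter_upwards [eventually_le_atBot (y-1)] with z hz
    exact (hmono.le_iff_le).2 hz
  have h2 : W (y - 1) < W y := hmono (by linarith)
  have : 0 < W y := lt_of_le_of_lt h1 h2
  simpa [hW, sub_pos] using this

noncomputable def M (y : ℝ) : ℝ := -y * Real.exp (y^2) * F y

lemma M_pos {y : ℝ} (hy : y < 0) : 0 < M y :=
  mul_pos (mul_pos (neg_pos.2 hy) (Real.exp_pos _)) (F_pos y)

lemma M_hasDeriv (y : ℝ) :
    HasDerivAt M (-(1+2*y^2) * Real.exp (y^2) * F y - y) y := by
  have hexp : HasDerivAt (fun y : ℝ => Real.exp (y^2)) (Real.exp (y^2) * (2*y)) y := by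
    simpa using (hasDerivAt_pow 2 y).exp
  have hA : HasDerivAt (fun y : ℝ => -y * Real.exp (y^2))
      (-Real.exp (y^2) + -y * (Real.exp (y^2) * (2*y))) y := by
    simpa using (hasDerivAt_id y).fun_neg.fun_mul hexp
  have h := hA.fun_mul (F_hasDeriv y)
  have he : Real.exp (y^2) * Real.exp (-y^2) = 1 := by
    rw [← Real.exp_add]; simp
  refine h.congr_deriv (Eq.symm ?_)
  linear_combination (y : ℝ) * he

lemma M_anti : StrictAntiOn M (Set.Iio 0) := by
  apply strictAntiOn_of_deriv_neg (convex_Iio 0)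
  · have hc : Continuous M := by
      have hF : Continuous F := by
        rw [continuous_iff_continuousAt]
        exact fun x => (F_hasDeriv x).continuousAt
      exact ((continuous_neg.mul (by continuity)).mul hF)
    exact hc.continuousOn
  · intro x hx
    rw [interior_Iio] at hx
    have hx0 : x < 0 := hx
    rw [(M_hasDeriv x).deriv]
    have hk : ft x < F x := key x
    have h1 : -x * Real.exp (-x^2) < F x * (1 + 2*x^2) :=
      (div_lt_iff₀ (denom_pos x)).1 hk
    have hm : (-x * Real.exp (-x^2)) * Real.exp (x^2)
        < (F x * (1 + 2*x^2)) * Real.exp (x^2) :=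
      mul_lt_mul_of_pos_right h1 (Real.exp_pos _)
    have he : Real.exp (-x^2) * Real.exp (x^2) = 1 := by
      rw [← Real.exp_add]; simp
    nlinarith [hm, he]

lemma expr_eq (α β d dstar ρ : ℝ) (hβ : 0 < β) (hd : dstar < d) {g : ℝ} (hg : 0 < g) :
    d - Real.sqrt (2 / Real.pi) * (ρ * α * g * Real.exp (-(dstar - d)^2 / (2 * β^2 * g^2))) /
        (1 + erf ((dstar - d) / (Real.sqrt 2 * (β * g)))) =
    d + (ρ * α * (dstar - d) / (2*β)) / M ((dstar - d) / (Real.sqrt 2 * (β * g))) := by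
  have h2 : (0:ℝ) < Real.sqrt 2 := Real.sqrt_pos.2 (by norm_num)
  have hpi : (0:ℝ) < Real.sqrt π := Real.sqrt_pos.2 Real.pi_pos
  have hden : (0:ℝ) < Real.sqrt 2 * (β * g) := by positivity
  set y := (dstar - d) / (Real.sqrt 2 * (β * g)) with hy
  have hylt : y < 0 := div_neg_of_neg_of_pos (by linarith) hden
  have hk : dstar - d = y * (Real.sqrt 2 * (β * g)) := by
    rw [hy]; field_simp
  have hsq2 : (Real.sqrt 2)^2 = 2 := Real.sq_sqrt (by norm_num)
  have harg : -(dstar - d)^2 / (2 * β^2 * g^2) = -y^2 := by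
    have hpow : (y * (Real.sqrt 2 * (β * g)))^2 = y^2 * (2 * β^2 * g^2) := by
      rw [mul_pow, mul_pow, mul_pow, hsq2]; ring
    rw [hk, hpow]
    field_simp
  have hsqrtdiv : Real.sqrt (2 / π) = Real.sqrt 2 / Real.sqrt π :=
    Real.sqrt_div' 2 Real.pi_pos.le ▸ by
      rw [Real.sqrt_div (by norm_num : (0:ℝ) ≤ 2)]
  rw [harg, one_add_erf y, M]
  have hFy : F y ≠ 0 := (F_pos y).ne'
  have hyne : y ≠ 0 := hylt.ne
  have hexpy : Real.exp (y^2) ≠ 0 := (Real.exp_pos _).ne'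
  have he : Real.exp (y^2) * Real.exp (-y^2) = 1 := by
    rw [← Real.exp_add]; simp
  rw [hsqrtdiv, hk]
  have hπ : Real.sqrt π * Real.sqrt π = π := Real.mul_self_sqrt Real.pi_pos.le
  have h22 : Real.sqrt 2 * Real.sqrt 2 = 2 := Real.mul_self_sqrt (by norm_num)
  field_simp
  linear_combination (-(√2 * ρ * α * g)) * he

end CEaux

/-- For negative correlation `ρ < 0`, the conditional expected inter-vehicle distance
is strictly increasing in the diffusion coefficient `g`. -/
theorem conditional_expectation_strictMono_in_g
    (α β d dstar ρ : ℝ) (hα : 0 < α) (hβ : 0 < β) (hd : dstar < d) (hρ : ρ < 0) :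
    StrictMonoOn (fun g : ℝ =>
      d - Real.sqrt (2 / Real.pi) * (ρ * α * g * Real.exp (-(dstar - d)^2 / (2 * β^2 * g^2))) /
        (1 + erf ((dstar - d) / (Real.sqrt 2 * (β * g))))) (Set.Ioi (0 : ℝ)) := by
  intro g1 hg1 g2 hg2 hlt
  have hg1' : (0:ℝ) < g1 := hg1
  have hg2' : (0:ℝ) < g2 := hg2
  simp only
  rw [CEaux.expr_eq α β d dstar ρ hβ hd hg1', CEaux.expr_eq α β d dstar ρ hβ hd hg2']
  have h2 : (0:ℝ) < Real.sqrt 2 := Real.sqrt_pos.2 (by norm_num)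
  have hd1 : (0:ℝ) < Real.sqrt 2 * (β * g1) := by positivity
  have hd2 : (0:ℝ) < Real.sqrt 2 * (β * g2) := by positivity
  set y1 := (dstar - d) / (Real.sqrt 2 * (β * g1)) with hy1
  set y2 := (dstar - d) / (Real.sqrt 2 * (β * g2)) with hy2
  have hy1n : y1 < 0 := div_neg_of_neg_of_pos (by linarith) hd1
  have hy2n : y2 < 0 := div_neg_of_neg_of_pos (by linarith) hd2
  have hylt : y1 < y2 := by
    rw [hy1, hy2, div_lt_div_iff₀ hd1 hd2]
    have hmul : Real.sqrt 2 * (β * g1) < Real.sqrt 2 * (β * g2) := by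
      apply mul_lt_mul_of_pos_left _ h2
      exact mul_lt_mul_of_pos_left hlt hβ
    nlinarith
  apply add_lt_add_right
  have hM2 : 0 < CEaux.M y2 := CEaux.M_pos hy2n
  have hMlt : CEaux.M y2 < CEaux.M y1 :=
    CEaux.M_anti (Set.mem_Iio.2 hy1n) (Set.mem_Iio.2 hy2n) hylt
  have hC : 0 < ρ * α * (dstar - d) / (2*β) := by
    apply div_pos _ (by positivity)
    have : ρ * α < 0 := mul_neg_of_neg_of_pos hρ hα
    nlinarith
  exact div_lt_div_of_pos_left hC hM2 hMlt
end
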